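/- Let u : ∂B(x,r) → ℂ be C¹ with m = min_{∂B(x,r)} |u| > 0, and write the current j = (iu, ∇u − iAu) for a C¹ vector field A on the closed ball B(x,r). Let d be the winding number of u/|u| on ∂B(x,r) and X = ∫_{B(x,r)} curl A. Then (1/2)∫_{∂B(x,r)} |u|²|∇φ − A|² + (1/2)∫_{B(x,r)} |curl A|² ≥ (π d²/r)·(m²/(1 + m² r/2)), where u = |u|e^{iφ} locally. -/

import Mathlib

open MeasureTheory Real

/-- Cauchy–Schwarz on an interval for continuous functions. -/
lemma cs_interval (g : ℝ → ℝ) (b : ℝ) (hb : 0 < b) (hg : Continuous g) :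
    (∫ t in (0:ℝ)..b, g t) ^ 2 / b ≤ ∫ t in (0:ℝ)..b, (g t) ^ 2 := by
  set I := ∫ t in (0:ℝ)..b, g t with hI
  set c := I / b with hc
  have hig : IntervalIntegrable g volume 0 b := hg.intervalIntegrable _ _
  have hig2 : IntervalIntegrable (fun t => (g t) ^ 2) volume 0 b :=
    (hg.pow 2).intervalIntegrable _ _
  have h0 : 0 ≤ ∫ t in (0:ℝ)..b, (g t - c) ^ 2 :=
    intervalIntegral.integral_nonneg hb.le (fun t _ => sq_nonneg _)
  have hexp : (∫ t in (0:ℝ)..b, (g t - c) ^ 2)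
      = (∫ t in (0:ℝ)..b, (g t) ^ 2) - 2 * c * I + c ^ 2 * b := by
    have he : (fun t => (g t - c) ^ 2) = fun t => (g t) ^ 2 - (2 * c) * g t + c ^ 2 := by
      funext t; ring
    rw [he, intervalIntegral.integral_add ((hig2.sub (hig.const_mul (2*c))))
      (intervalIntegrable_const), intervalIntegral.integral_sub hig2 (hig.const_mul (2*c)),
      intervalIntegral.integral_const_mul, intervalIntegral.integral_const]
    simp [← hI]
    ring
  rw [hexp, hc] at h0
  have hbne := hb.ne'
  have : I ^ 2 / b = 2 * (I / b) * I - (I / b) ^ 2 * b := by field_simp; ring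
  nlinarith [h0]

/-- Cauchy–Schwarz for a set of finite positive measure. -/
lemma cs_set (s : Set ℂ) (V : ℝ) (hV : 0 < V) (hVm : (volume s).toReal = V)
    (hVfin : volume s ≠ ⊤)
    (h : ℂ → ℝ) (hint : Integrable h (volume.restrict s))
    (hint2 : Integrable (fun z => (h z) ^ 2) (volume.restrict s)) :
    (∫ z in s, h z) ^ 2 / V ≤ ∫ z in s, (h z) ^ 2 := by
  haveI : IsFiniteMeasure (volume.restrict s) :=
    ⟨by simpa [Measure.restrict_apply_univ] using hVfin.lt_top⟩
  set I := ∫ z in s, h z with hI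
  set c := I / V with hc
  have hi_sub : Integrable (fun z => (h z) ^ 2 - (2 * c) * h z) (volume.restrict s) :=
    hint2.sub (hint.const_mul (2*c))
  have h0 : 0 ≤ ∫ z in s, (h z - c) ^ 2 := integral_nonneg (fun z => sq_nonneg _)
  have hexp : (∫ z in s, (h z - c) ^ 2) = (∫ z in s, (h z) ^ 2) - 2 * c * I + c ^ 2 * V := by
    have he : (fun z => (h z - c) ^ 2) = fun z => ((h z) ^ 2 - (2 * c) * h z) + c ^ 2 := by
      funext z; ring
    rw [he, integral_add hi_sub (integrable_const _),
      integral_sub hint2 (hint.const_mul (2*c)), integral_const_mul, integral_const]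
    simp [Measure.restrict_apply_univ, Measure.real, hVm, ← hI, smul_eq_mul]
    ring
  rw [hexp, hc] at h0
  have hVne := hV.ne'
  have : I ^ 2 / V = 2 * (I / V) * I - (I / V) ^ 2 * V := by field_simp; ring
  nlinarith [h0]

theorem stmt6 (x : ℂ) (r m X : ℝ) (d : ℤ) (hr : 0 < r) (hm0 : 0 < m) (hm1 : m ≤ 1)
    (ρ φ φ' a : ℝ → ℝ) (h : ℂ → ℝ)
    (hρm : ∀ θ, m ≤ ρ θ) (hcρ : Continuous ρ) (hca : Continuous a) (hcφ' : Continuous φ')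
    (hφ : ∀ θ, HasDerivAt φ (φ' θ) θ)
    (hdeg : φ (2 * π) - φ 0 = 2 * π * d)
    (hX1 : (∫ θ in (0:ℝ)..(2 * π), a θ * r) = X)
    (hX2 : (∫ z in Metric.ball x r, h z) = X)
    (hh2 : Integrable (fun z => (h z) ^ 2) (volume.restrict (Metric.ball x r))) :
    π * (d : ℝ) ^ 2 / r * (m ^ 2 / (1 + m ^ 2 * r / 2)) ≤
      (1 / 2) * (∫ θ in (0:ℝ)..(2 * π), (ρ θ) ^ 2 * (φ' θ / r - a θ) ^ 2 * r)
        + (1 / 2) * ∫ z in Metric.ball x r, (h z) ^ 2 := by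
  have hπ : (0:ℝ) < π := pi_pos
  have h2π : (0:ℝ) < 2 * π := by linarith
  set g : ℝ → ℝ := fun θ => φ' θ / r - a θ with hg
  have hcg : Continuous g := (hcφ'.div_const r).sub hca
  have hφ'int : (∫ θ in (0:ℝ)..(2*π), φ' θ) = 2 * π * d := by
    rw [intervalIntegral.integral_eq_sub_of_hasDerivAt (fun t _ => hφ t)
      (hcφ'.intervalIntegrable _ _)]
    exact hdeg
  have haint : (∫ θ in (0:ℝ)..(2*π), a θ) = X / r := by
    have h1 : (∫ θ in (0:ℝ)..(2*π), a θ * r) = (∫ θ in (0:ℝ)..(2*π), a θ) * r :=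
      intervalIntegral.integral_mul_const _ _
    rw [h1] at hX1
    field_simp [hr.ne'] at hX1 ⊢
    linarith [hX1]
  have hgint : (∫ θ in (0:ℝ)..(2*π), g θ) = (2 * π * d - X) / r := by
    rw [hg]
    rw [intervalIntegral.integral_sub ((hcφ'.div_const r).intervalIntegrable _ _)
      (hca.intervalIntegrable _ _)]
    have h1 : (∫ θ in (0:ℝ)..(2*π), φ' θ / r) = (∫ θ in (0:ℝ)..(2*π), φ' θ) / r := by
      simp [intervalIntegral.integral_div]
    rw [h1, hφ'int, haint]; ring
  have hCS1 : ((2 * π * d - X) / r) ^ 2 / (2 * π) ≤ ∫ θ in (0:ℝ)..(2*π), (g θ) ^ 2 := by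
    rw [← hgint]; exact cs_interval g (2*π) h2π hcg
  have hfirst : m ^ 2 * r * (∫ θ in (0:ℝ)..(2*π), (g θ) ^ 2)
      ≤ ∫ θ in (0:ℝ)..(2*π), (ρ θ) ^ 2 * (g θ) ^ 2 * r := by
    have hmono : (∫ θ in (0:ℝ)..(2*π), m ^ 2 * (g θ) ^ 2 * r)
        ≤ ∫ θ in (0:ℝ)..(2*π), (ρ θ) ^ 2 * (g θ) ^ 2 * r := by
      apply intervalIntegral.integral_mono_on h2π.le
      · exact ((continuous_const.mul (hcg.pow 2)).mul continuous_const).intervalIntegrable _ _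
      · exact (((hcρ.pow 2).mul (hcg.pow 2)).mul continuous_const).intervalIntegrable _ _
      · intro t _
        have h1 : m ^ 2 ≤ (ρ t) ^ 2 := by nlinarith [hρm t, hm0]
        have h2 := mul_le_mul_of_nonneg_right
          (mul_le_mul_of_nonneg_right h1 (sq_nonneg (g t))) hr.le
        linarith
    have heq : (∫ θ in (0:ℝ)..(2*π), m ^ 2 * (g θ) ^ 2 * r)
        = m ^ 2 * r * (∫ θ in (0:ℝ)..(2*π), (g θ) ^ 2) := by
      rw [← intervalIntegral.integral_const_mul]
      apply intervalIntegral.integral_congr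
      intro t _; ring
    linarith [hmono, heq ▸ hmono]
  have hVfin : volume (Metric.ball x r) ≠ ⊤ := by
    rw [Complex.volume_ball]
    exact ENNReal.mul_ne_top (by simp [ENNReal.pow_ne_top]) (by simp)
  have hVm : (volume (Metric.ball x r)).toReal = π * r ^ 2 := by
    rw [Complex.volume_ball, ENNReal.toReal_mul, ENNReal.toReal_pow,
      ENNReal.toReal_ofReal hr.le]
    simp [mul_comm]
  have hV : (0:ℝ) < π * r ^ 2 := by positivity
  have hsecond : X ^ 2 / (π * r ^ 2) ≤ ∫ z in Metric.ball x r, (h z) ^ 2 := by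
    by_cases hint : Integrable h (volume.restrict (Metric.ball x r))
    · rw [← hX2]
      exact cs_set _ _ hV hVm hVfin h hint hh2
    · have hX0 : X = 0 := by rw [← hX2, integral_undef hint]
      rw [hX0]
      simpa using integral_nonneg (fun z : ℂ => sq_nonneg (h z))
  have key : m ^ 2 * ((2 * π * d) - X) ^ 2 / (4 * π * r) + X ^ 2 / (2 * π * r ^ 2)
      ≤ (1 / 2) * (∫ θ in (0:ℝ)..(2 * π), (ρ θ) ^ 2 * (g θ) ^ 2 * r)
        + (1 / 2) * ∫ z in Metric.ball x r, (h z) ^ 2 := by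
    have e1 : m ^ 2 * ((2 * π * d) - X) ^ 2 / (4 * π * r)
        = (1/2) * (m ^ 2 * r * (((2 * π * d - X) / r) ^ 2 / (2 * π))) := by
      field_simp [hπ.ne', hr.ne']
      ring
    have e2 : X ^ 2 / (2 * π * r ^ 2) = (1/2) * (X ^ 2 / (π * r ^ 2)) := by
      field_simp [hπ.ne', hr.ne']
    have h1 : m ^ 2 * r * (((2 * π * d - X) / r) ^ 2 / (2 * π))
        ≤ m ^ 2 * r * (∫ θ in (0:ℝ)..(2*π), (g θ) ^ 2) :=
      mul_le_mul_of_nonneg_left hCS1 (by positivity)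
    rw [e1, e2]
    have A : (1/2 : ℝ) * (m ^ 2 * r * (((2 * π * d - X) / r) ^ 2 / (2 * π)))
        ≤ (1/2) * (∫ θ in (0:ℝ)..(2 * π), (ρ θ) ^ 2 * (g θ) ^ 2 * r) :=
      mul_le_mul_of_nonneg_left (h1.trans hfirst) (by norm_num)
    have B : (1/2 : ℝ) * (X ^ 2 / (π * r ^ 2))
        ≤ (1/2) * ∫ z in Metric.ball x r, (h z) ^ 2 :=
      mul_le_mul_of_nonneg_left hsecond (by norm_num)
    linarith
  refine le_trans ?_ key
  set D : ℝ := 2 * π * d with hD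
  set α : ℝ := m ^ 2 / (4 * π * r) with hα
  set β : ℝ := 1 / (2 * π * r ^ 2) with hβ
  have hα0 : 0 < α := by rw [hα]; positivity
  have hβ0 : 0 < β := by rw [hβ]; positivity
  have hmin : α * β * D ^ 2 / (α + β) ≤ α * (D - X) ^ 2 + β * X ^ 2 := by
    rw [div_le_iff₀ (by positivity)]
    have expand : (α * (D - X) ^ 2 + β * X ^ 2) * (α + β) - α * β * D ^ 2
        = (α * (D - X) - β * X) ^ 2 := by ring
    nlinarith [sq_nonneg (α * (D - X) - β * X), expand]
  have heq : α * β * D ^ 2 / (α + β) = π * (d:ℝ) ^ 2 / r * (m ^ 2 / (1 + m ^ 2 * r / 2)) := by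
    rw [hα, hβ, hD]
    have hden : (0:ℝ) < 1 + m ^ 2 * r / 2 := by positivity
    rw [div_eq_div_iff (by positivity) (by positivity)] at *
    · field_simp [hπ.ne', hr.ne', hden.ne']
      ring
  calc π * (d:ℝ) ^ 2 / r * (m ^ 2 / (1 + m ^ 2 * r / 2)) = α * β * D ^ 2 / (α + β) := heq.symm
    _ ≤ α * (D - X) ^ 2 + β * X ^ 2 := hmin
    _ = m ^ 2 * (D - X) ^ 2 / (4 * π * r) + X ^ 2 / (2 * π * r ^ 2) := by
        rw [hα, hβ]; ring
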